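/- arXiv:1706.03721 — 4 statements merged into one kernel-verified Lean document; each statement's English description precedes it below -/
import Mathlib

section
/- In any finite simple graph, at least half of the edges are incident to a 'good' node, where a node v is good if at least d(v)/3 of its neighbors w satisfy d(w) ≤ d(v). -/
open Finset
open scoped Classical

lemma card_pairs_aux {V : Type*} [Fintype V] (Q : V → V → Prop)
    [DecidablePred fun p : V × V => Q p.1 p.2] [∀ v, DecidablePred fun w => Q v w] :
    (univ.filter fun p : V × V => Q p.1 p.2).card
      = ∑ v, (univ.filter fun w => Q v w).card := by
  rw [Finset.card_eq_sum_card_fiberwise (f := Prod.fst) (t := univ) (fun _ _ => mem_univ _)]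
  refine Finset.sum_congr rfl fun v _ => ?_
  refine Finset.card_bij (fun p _ => p.2) ?_ ?_ ?_
  · rintro ⟨a, b⟩ hp
    simp only [mem_filter, mem_univ, true_and] at hp ⊢
    obtain ⟨h1, h2⟩ := hp; subst h2; exact h1
  · rintro ⟨a, b⟩ ha ⟨c, d⟩ hc h
    simp only [mem_filter] at ha hc
    obtain ⟨-, ha2⟩ := ha; obtain ⟨-, hc2⟩ := hc
    simp_all [Prod.ext_iff]
  · intro b hb
    simp only [mem_filter, mem_univ, true_and] at hb
    exact ⟨(v, b), by simp [hb], rfl⟩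

/-- In any finite simple graph, at least half of the edges are incident to a
`good` node, where `v` is good if at least `d(v)/3` of its neighbors `w`
satisfy `d(w) ≤ d(v)`. -/
theorem half_edges_incident_to_good_node {V : Type*} [Fintype V]
    (G : SimpleGraph V) [DecidableRel G.Adj] :
    let good : V → Prop := fun v =>
      (G.degree v : ℝ) / 3 ≤
        ((G.neighborFinset v).filter (fun w => G.degree w ≤ G.degree v)).card
    (G.edgeFinset.card : ℝ) / 2 ≤
      (G.edgeFinset.filter (fun e => ∃ v, good v ∧ v ∈ e)).card := by
  intro good
  classical
  set T := G.edgeFinset.filter (fun e => ∃ v, good v ∧ v ∈ e) with hTdef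
  set F := G.edgeFinset.filter (fun e => ¬ ∃ v, good v ∧ v ∈ e) with hFdef
  have hTF : T.card + F.card = G.edgeFinset.card :=
    card_filter_add_card_filter_not _
  suffices h : F.card ≤ T.card by
    have h1 : (G.edgeFinset.card : ℝ) = T.card + F.card := by exact_mod_cast hTF.symm
    have h2 : (F.card : ℝ) ≤ T.card := by exact_mod_cast h
    linarith
  -- key function for tie-breaking orientation
  set N := Fintype.card V with hN
  set key : V → ℕ := fun v => (N + 1) * G.degree v + (Fintype.equivFin V v : ℕ) with hkey
  have hkey_le : ∀ u v, key u < key v → G.degree u ≤ G.degree v := by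
    intro u v h
    by_contra hc
    push_neg at hc
    have h1 : ((Fintype.equivFin V u) : ℕ) < N := (Fintype.equivFin V u).isLt
    have h2 : ((Fintype.equivFin V v) : ℕ) < N := (Fintype.equivFin V v).isLt
    simp only [hkey] at h
    nlinarith
  have hkey_inj : Function.Injective key := by
    intro u v h
    have hmod : ((N + 1) * G.degree u + (Fintype.equivFin V u : ℕ)) % (N + 1)
        = ((N + 1) * G.degree v + (Fintype.equivFin V v : ℕ)) % (N + 1) := by
      simp only [hkey] at h; rw [h]
    rw [Nat.mul_add_mod, Nat.mul_add_mod,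
      Nat.mod_eq_of_lt (lt_of_lt_of_le (Fintype.equivFin V u).isLt (Nat.le_succ N)),
      Nat.mod_eq_of_lt (lt_of_lt_of_le (Fintype.equivFin V v).isLt (Nat.le_succ N))] at hmod
    exact (Fintype.equivFin V).injective (Fin.ext hmod)
  -- bad vertices
  set B : Finset V := univ.filter (fun v => ¬ good v) with hB
  set a : V → ℕ := fun v =>
    ((G.neighborFinset v).filter (fun w => G.degree w ≤ G.degree v)).card with ha
  have hbad : ∀ v ∈ B, 3 * a v < G.degree v := by
    intro v hv
    simp only [hB, mem_filter, mem_univ, true_and, good] at hv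
    push_neg at hv
    rw [lt_div_iff₀ (by norm_num : (0:ℝ) < 3)] at hv
    have h3 : 3 * ((filter (fun w => G.degree w ≤ G.degree v) (G.neighborFinset v)).card : ℝ)
        < (G.degree v : ℝ) := by linarith
    exact_mod_cast h3
  -- the bad-bad subgraph
  set G' : SimpleGraph V :=
    { Adj := fun u v => G.Adj u v ∧ ¬ good u ∧ ¬ good v
      symm := ⟨fun u v h => ⟨h.1.symm, h.2.2, h.2.1⟩⟩
      loopless := ⟨fun v h => h.1.ne rfl⟩ } with hG'
  have hFG' : F = G'.edgeFinset := by
    ext e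
    refine Sym2.ind (fun u v => ?_) e
    simp only [hFdef, mem_filter, SimpleGraph.mem_edgeFinset, SimpleGraph.mem_edgeSet,
      Sym2.mem_iff, hG']
    constructor
    · rintro ⟨hadj, hne⟩
      push_neg at hne
      exact ⟨hadj, fun hg => (hne u hg).1 rfl, fun hg => (hne v hg).2 rfl⟩
    · rintro ⟨hadj, hgu, hgv⟩
      refine ⟨hadj, ?_⟩
      push_neg
      intro x hg
      exact ⟨fun h => hgu (h ▸ hg), fun h => hgv (h ▸ hg)⟩
  set Sbb := univ.filter (fun p : V × V => G.Adj p.1 p.2 ∧ ¬ good p.1 ∧ ¬ good p.2) with hSbbdef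
  have hSbb : Sbb.card = 2 * F.card := by
    rw [hFG', SimpleGraph.two_mul_card_edgeFinset]
  -- up-oriented bad-bad pairs
  set Dup := Sbb.filter (fun p => key p.1 < key p.2) with hDup
  have hDcard : Dup.card = F.card := by
    have hsplit : Dup.card + (Sbb.filter (fun p => ¬ key p.1 < key p.2)).card = Sbb.card :=
      card_filter_add_card_filter_not _
    have hbij : (Sbb.filter (fun p => ¬ key p.1 < key p.2)).card = Dup.card := by
      refine Finset.card_bij (fun p _ => (p.2, p.1)) ?_ ?_ ?_
      · rintro ⟨u, v⟩ hp
        simp only [hDup, hSbbdef, mem_filter, mem_univ, true_and] at hp ⊢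
        obtain ⟨⟨hadj, hg1, hg2⟩, hlt⟩ := hp
        refine ⟨⟨hadj.symm, hg2, hg1⟩, ?_⟩
        rcases lt_or_ge (key v) (key u) with h | h
        · exact h
        · exact absurd (lt_of_le_of_ne h (fun hh => G.ne_of_adj hadj (hkey_inj hh))) hlt
      · rintro ⟨u, v⟩ _ ⟨u', v'⟩ _ h
        simp_all [Prod.ext_iff]
      · rintro ⟨u, v⟩ hq
        simp only [hDup, hSbbdef, mem_filter, mem_univ, true_and] at hq
        obtain ⟨⟨hadj, hg1, hg2⟩, hlt⟩ := hq
        refine ⟨(v, u), ?_, rfl⟩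
        simp only [mem_filter, hSbbdef, mem_univ, true_and]
        exact ⟨⟨hadj.symm, hg2, hg1⟩, not_lt.2 hlt.le⟩
    omega
  have hDle : Dup.card ≤ ∑ v ∈ B, a v := by
    rw [Finset.card_eq_sum_card_fiberwise (f := Prod.snd) (t := B) ?_]
    · refine Finset.sum_le_sum fun v hv => ?_
      refine Finset.card_le_card_of_injOn Prod.fst ?_ ?_
      · rintro ⟨u, w⟩ hp
        simp only [mem_coe, hDup, hSbbdef, mem_filter, mem_univ, true_and] at hp
        obtain ⟨⟨⟨hadj, _, _⟩, hlt⟩, rfl⟩ := hp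
        simp only [mem_coe, ha, mem_filter, SimpleGraph.mem_neighborFinset]
        exact ⟨hadj.symm, hkey_le _ _ hlt⟩
      · rintro ⟨u, w⟩ hu ⟨u', w'⟩ hu' h
        simp only [mem_coe, mem_filter] at hu hu'
        simp_all [Prod.ext_iff]
    · rintro ⟨u, w⟩ hp
      simp only [mem_coe, hDup, hSbbdef, mem_filter, mem_univ, true_and] at hp
      simp only [mem_coe, hB, mem_filter, mem_univ, true_and]
      exact hp.1.2.2
  -- pairs with bad first coordinate
  set Sb := univ.filter (fun p : V × V => G.Adj p.1 p.2 ∧ ¬ good p.1) with hSbdef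
  have hSb : Sb.card = ∑ v ∈ B, G.degree v := by
    rw [hSbdef, card_pairs_aux (fun u w => G.Adj u w ∧ ¬ good u)]
    rw [← Finset.sum_subset (Finset.subset_univ B) ?_]
    · refine Finset.sum_congr rfl fun v hv => ?_
      simp only [hB, mem_filter, mem_univ, true_and] at hv
      rw [← SimpleGraph.card_neighborFinset_eq_degree]
      congr 1
      ext w
      simp [SimpleGraph.mem_neighborFinset, hv]
    · intro v _ hv
      simp only [hB, mem_filter, mem_univ, true_and, not_not] at hv
      rw [Finset.card_eq_zero]
      ext w
      simp [hv]
  have hsplit2 : (Sb.filter (fun p => good p.2)).card + Sbb.card = Sb.card := by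
    have : Sbb = Sb.filter (fun p => ¬ good p.2) := by
      ext p
      simp only [hSbbdef, hSbdef, mem_filter, mem_univ, true_and]
      tauto
    rw [this]
    exact card_filter_add_card_filter_not _
  have hSbg : (Sb.filter (fun p => good p.2)).card ≤ T.card := by
    refine Finset.card_le_card_of_injOn (fun p : V × V => Sym2.mk p.1 p.2) ?_ ?_
    · rintro ⟨u, w⟩ hp
      simp only [mem_coe, hSbdef, mem_filter, mem_univ, true_and] at hp
      obtain ⟨⟨hadj, hbu⟩, hgw⟩ := hp
      simp only [mem_coe, hTdef, mem_filter, SimpleGraph.mem_edgeFinset, SimpleGraph.mem_edgeSet]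
      exact ⟨hadj, w, hgw, Sym2.mem_mk_right u w⟩
    · rintro ⟨u, w⟩ hu ⟨u', w'⟩ hu' h
      simp only [mem_coe, mem_filter, hSbdef, mem_univ, true_and] at hu hu'
      rw [Sym2.eq_iff] at h
      rcases h with h | h
      · exact Prod.ext h.1 h.2
      · obtain ⟨rfl, rfl⟩ := h
        exact absurd hu'.1.2 (not_not.2 hu.2)
  -- final chain
  have chain : 3 * F.card ≤ ∑ v ∈ B, G.degree v := by
    calc 3 * F.card = 3 * Dup.card := by rw [hDcard]
      _ ≤ 3 * ∑ v ∈ B, a v := by omega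
      _ = ∑ v ∈ B, 3 * a v := by rw [Finset.mul_sum]
      _ ≤ ∑ v ∈ B, G.degree v := Finset.sum_le_sum fun v hv => (hbad v hv).le
  omega
end

section
/- If X_1, ..., X_k are independent geometric random variables with parameter 1/2 (counting the number of successes before the first failure), then the probability that the maximum of X_1, ..., X_k is attained at a unique index is at least 1/3. -/
open MeasureTheory ProbabilityTheory
open scoped ENNReal


lemma pow_sub_pow_le_aux (a b : ℝ) (ha : 0 ≤ a) (hab : a ≤ b) :
    ∀ k : ℕ, b ^ (k+1) - a ^ (k+1) ≤ ((k:ℝ)+1) * b ^ k * (b - a) := by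
  intro k
  induction k with
  | zero => simp
  | succ k ih =>
    have hb : 0 ≤ b := le_trans ha hab
    have h1 : a ^ (k+1) ≤ b ^ (k+1) := pow_le_pow_left₀ ha hab _
    have h2 : b * (b ^ (k+1) - a ^ (k+1)) ≤ b * (((k:ℝ)+1) * b ^ k * (b - a)) :=
      mul_le_mul_of_nonneg_left ih hb
    have h3 : a ^ (k+1) * (b - a) ≤ b ^ (k+1) * (b - a) :=
      mul_le_mul_of_nonneg_right h1 (sub_nonneg.2 hab)
    have e1 : b ^ (k+1+1) - a ^ (k+1+1)
        = b * (b ^ (k+1) - a ^ (k+1)) + a ^ (k+1) * (b - a) := by ring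
    have e2 : ((k:ℝ)+1+1) * b ^ (k+1) * (b - a)
        = b * (((k:ℝ)+1) * b ^ k * (b - a)) + b ^ (k+1) * (b - a) := by ring
    push_cast
    linarith

lemma telescope (m : ℕ) (N : ℕ) :
    2⁻¹ * (1 - (2⁻¹:ℝ) ^ N) ^ (m+1) ≤
      ∑ n ∈ Finset.range N, ((m:ℝ)+1) * 2⁻¹ ^ (n+2) * (1 - (2⁻¹:ℝ) ^ (n+1)) ^ m := by
  induction N with
  | zero => simp
  | succ N ih =>
    rw [Finset.sum_range_succ]
    have ha : (0:ℝ) ≤ 1 - (2⁻¹:ℝ) ^ N := by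
      have : (2⁻¹:ℝ) ^ N ≤ 1 := pow_le_one₀ (by norm_num) (by norm_num)
      linarith
    have hab : 1 - (2⁻¹:ℝ) ^ N ≤ 1 - (2⁻¹:ℝ) ^ (N+1) := by
      have : (2⁻¹:ℝ) ^ (N+1) ≤ (2⁻¹:ℝ) ^ N := by
        rw [pow_succ]; nlinarith [pow_nonneg (by norm_num : (0:ℝ) ≤ 2⁻¹) N]
      linarith
    have key := pow_sub_pow_le_aux _ _ ha hab m
    have hdiff : (1 - (2⁻¹:ℝ) ^ (N+1)) - (1 - (2⁻¹:ℝ) ^ N) = (2⁻¹:ℝ) ^ (N+1) := by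
      rw [pow_succ]; ring
    rw [hdiff] at key
    have heq : ((m:ℝ)+1) * 2⁻¹ ^ (N+2) * (1 - (2⁻¹:ℝ) ^ (N+1)) ^ m
        = 2⁻¹ * (((m:ℝ)+1) * (1 - (2⁻¹:ℝ) ^ (N+1)) ^ m * (2⁻¹:ℝ) ^ (N+1)) := by
      rw [pow_succ, pow_succ]; ring
    linarith

lemma geom_cdf {Ω : Type*} [MeasurableSpace Ω] (μ : Measure Ω)
    (Y : Ω → ℕ) (hYm : Measurable Y)
    (hY : ∀ j, μ {ω | Y ω = j} = (2 : ℝ≥0∞)⁻¹ ^ (j + 1)) (n : ℕ) :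
    μ {ω | Y ω < n} = ENNReal.ofReal (1 - (2⁻¹:ℝ) ^ n) := by
  induction n with
  | zero => simp
  | succ n ih =>
    have hset : {ω | Y ω < n + 1} = {ω | Y ω < n} ∪ {ω | Y ω = n} := by
      ext ω; simp [Nat.lt_succ_iff_lt_or_eq]; exact le_iff_lt_or_eq
    have hdisj : Disjoint {ω | Y ω < n} {ω | Y ω = n} := by
      rw [Set.disjoint_left]
      intro ω h1 h2
      simp only [Set.mem_setOf_eq] at h1 h2
      omega
    have hm2 : MeasurableSet {ω | Y ω = n} := hYm (measurableSet_singleton n)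
    rw [hset, measure_union hdisj hm2, ih, hY]
    have h2 : ((2:ℝ≥0∞))⁻¹ ^ (n+1) = ENNReal.ofReal ((2⁻¹:ℝ) ^ (n+1)) := by
      rw [ENNReal.ofReal_pow (by norm_num), ENNReal.ofReal_inv_of_pos (by norm_num)]
      norm_num
    have h0 : (0:ℝ) ≤ 1 - (2⁻¹:ℝ) ^ n := by
      have : (2⁻¹:ℝ) ^ n ≤ 1 := pow_le_one₀ (by norm_num) (by norm_num)
      linarith
    rw [h2, ← ENNReal.ofReal_add h0 (by positivity)]
    congr 1
    rw [pow_succ]; ring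

/-- For `k ≥ 1` i.i.d. geometric(1/2) random variables (number of successes
before the first failure, `P[X i = j] = 2^{-(j+1)}`), the probability that the
maximum is attained at a unique index is at least `1/3`. -/
theorem unique_max_of_iid_geom {Ω : Type*} [MeasurableSpace Ω]
    (μ : Measure Ω) [IsProbabilityMeasure μ] (k : ℕ) (hk : 1 ≤ k)
    (X : Fin k → Ω → ℕ) (hmeas : ∀ i, Measurable (X i))
    (hindep : iIndepFun X μ)
    (hgeom : ∀ i j, μ {ω | X i ω = j} = (2 : ℝ≥0∞)⁻¹ ^ (j + 1)) :
    (3 : ℝ≥0∞)⁻¹ ≤ μ {ω | ∃ i, ∀ j, j ≠ i → X j ω < X i ω} := by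
  classical
  obtain ⟨m, rfl⟩ : ∃ m, k = m + 1 := ⟨k - 1, (Nat.succ_pred_eq_of_pos hk).symm⟩
  set N := m + 3 with hNdef
  set q : ℕ → ℝ := fun n => 1 - (2⁻¹:ℝ) ^ n with hq
  have hqnn : ∀ n, 0 ≤ q n := by
    intro n
    have : (2⁻¹:ℝ) ^ n ≤ 1 := pow_le_one₀ (by norm_num) (by norm_num)
    simp only [hq]; linarith
  set S : Fin (m+1) × ℕ → Fin (m+1) → Set ℕ :=
    fun p j => if j = p.1 then {p.2 + 1} else Set.Iio (p.2 + 1) with hS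
  set A : Fin (m+1) × ℕ → Set Ω := fun p => ⋂ j, X j ⁻¹' S p j with hA
  have hSmeas : ∀ p j, MeasurableSet (S p j) := by
    intro p j
    by_cases h : j = p.1
    · simp only [hS, if_pos h]; exact measurableSet_singleton _
    · simp only [hS, if_neg h]; exact measurableSet_Iio
  have hmem : ∀ p ω, ω ∈ A p ↔ (X p.1 ω = p.2 + 1 ∧ ∀ j, j ≠ p.1 → X j ω < p.2 + 1) := by
    intro p ω
    simp only [hA, Set.mem_iInter, Set.mem_preimage, hS]
    constructor
    · intro h
      refine ⟨?_, ?_⟩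
      · have := h p.1; simpa using this
      · intro j hj; have := h j; simpa [hj] using this
    · rintro ⟨h1, h2⟩ j
      by_cases hj : j = p.1
      · subst hj; simpa using h1
      · simpa [hj] using h2 j hj
  have hAmeas : ∀ p, MeasurableSet (A p) :=
    fun p => MeasurableSet.iInter fun j => hmeas j (hSmeas p j)
  set s : Finset (Fin (m+1) × ℕ) := Finset.univ ×ˢ Finset.range N with hs
  -- disjointness
  have hdisj : Set.PairwiseDisjoint (↑s) A := by
    intro p _ r _ hpr
    refine Set.disjoint_left.2 fun ω hωp hωr => hpr ?_
    rw [hmem] at hωp hωr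
    by_cases h : p.1 = r.1
    · have h2 : p.2 = r.2 := by
        have e1 := hωp.1; have e2 := hωr.1; rw [h, e2] at e1; omega
      exact Prod.ext h h2
    · exfalso
      have h1 := hωp.2 r.1 (fun hh => h hh.symm)
      have h2 := hωr.2 p.1 h
      rw [hωp.1] at h2; rw [hωr.1] at h1; omega
  -- subset
  have hsub : (⋃ p ∈ s, A p) ⊆ {ω | ∃ i, ∀ j, j ≠ i → X j ω < X i ω} := by
    intro ω hω
    simp only [Set.mem_iUnion] at hω
    obtain ⟨p, _, hp⟩ := hω
    rw [hmem] at hp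
    exact ⟨p.1, fun j hj => by rw [hp.1]; exact hp.2 j hj⟩
  -- value of each piece
  have hval : ∀ p : Fin (m+1) × ℕ,
      μ (A p) = ENNReal.ofReal ((2⁻¹:ℝ) ^ (p.2 + 2) * q (p.2 + 1) ^ m) := by
    intro p
    have hprod : μ (A p) = ∏ j, μ (X j ⁻¹' S p j) := by
      rw [hA]
      exact hindep.meas_iInter fun j => ⟨S p j, hSmeas p j, rfl⟩
    rw [hprod, ← Finset.mul_prod_erase Finset.univ _ (Finset.mem_univ p.1)]
    have hXi : μ (X p.1 ⁻¹' S p p.1) = (2 : ℝ≥0∞)⁻¹ ^ (p.2 + 2) := by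
      simp only [hS, if_pos rfl]
      have : X p.1 ⁻¹' {p.2 + 1} = {ω | X p.1 ω = p.2 + 1} := rfl
      rw [this, hgeom p.1 (p.2 + 1)]
    have hXj : ∀ j ∈ Finset.univ.erase p.1,
        μ (X j ⁻¹' S p j) = ENNReal.ofReal (q (p.2 + 1)) := by
      intro j hj
      have hj' := Finset.ne_of_mem_erase hj
      simp only [hS, if_neg hj']
      have : X j ⁻¹' Set.Iio (p.2 + 1) = {ω | X j ω < p.2 + 1} := rfl
      rw [this, geom_cdf μ (X j) (hmeas j) (hgeom j) (p.2 + 1)]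
    rw [hXi, Finset.prod_congr rfl hXj, Finset.prod_const]
    have hcard : (Finset.univ.erase p.1).card = m := by
      rw [Finset.card_erase_of_mem (Finset.mem_univ _), Finset.card_univ, Fintype.card_fin]
      omega
    rw [hcard]
    have h2 : ((2:ℝ≥0∞))⁻¹ ^ (p.2 + 2) = ENNReal.ofReal ((2⁻¹:ℝ) ^ (p.2 + 2)) := by
      rw [ENNReal.ofReal_pow (by norm_num), ENNReal.ofReal_inv_of_pos (by norm_num)]
      norm_num
    rw [h2, ← ENNReal.ofReal_pow (hqnn _), ← ENNReal.ofReal_mul (by positivity)]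
  -- sum of the pieces
  have hsum : ∑ p ∈ s, μ (A p)
      = ((m:ℝ≥0∞) + 1) * ENNReal.ofReal (∑ n ∈ Finset.range N, (2⁻¹:ℝ) ^ (n + 2) * q (n + 1) ^ m) := by
    rw [hs, Finset.sum_product]
    simp only [hval]
    rw [ENNReal.ofReal_sum_of_nonneg (fun n _ => mul_nonneg (by positivity) (pow_nonneg (hqnn _) m))]
    rw [Finset.sum_const, Finset.card_univ, Fintype.card_fin, nsmul_eq_mul]
    push_cast
    ring
  simp only [hq] at hsum
  -- real-number estimate
  set S0 : ℝ := ∑ n ∈ Finset.range N, (2⁻¹:ℝ) ^ (n + 2) * (1 - (2⁻¹:ℝ) ^ (n + 1)) ^ m with hS0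
  have hS0nn : 0 ≤ S0 := Finset.sum_nonneg fun n _ => by
    have := hqnn (n+1); simp only [hq] at this; positivity
  have hreal : (3:ℝ)⁻¹ ≤ ((m:ℝ) + 1) * S0 := by
    have htel := telescope m N
    have hmul : ∑ n ∈ Finset.range N, ((m:ℝ)+1) * 2⁻¹ ^ (n+2) * (1 - (2⁻¹:ℝ) ^ (n+1)) ^ m
        = ((m:ℝ)+1) * S0 := by
      rw [hS0, Finset.mul_sum]; exact Finset.sum_congr rfl fun n _ => by ring
    rw [hmul] at htel
    have hpow1 : (2⁻¹:ℝ) ^ N ≤ 1 := pow_le_one₀ (by norm_num) (by norm_num)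
    have hber := one_add_mul_le_pow (a := -((2⁻¹:ℝ) ^ N)) (by linarith) (m+1)
    have hsmall : ((m:ℝ)+1) * (2⁻¹:ℝ) ^ N ≤ 8⁻¹ := by
      have h1 : (m:ℝ) + 1 ≤ 2 ^ m := by
        have h1n : m + 1 ≤ 2 ^ m := Nat.lt_two_pow_self (n := m)
        exact_mod_cast h1n
      calc ((m:ℝ)+1) * (2⁻¹:ℝ) ^ N ≤ (2:ℝ) ^ m * (2⁻¹:ℝ) ^ N :=
            mul_le_mul_of_nonneg_right h1 (by positivity)
        _ = 8⁻¹ := by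
            rw [hNdef, pow_add, ← mul_assoc, ← mul_pow]; norm_num
    have hber' : 1 - ((m:ℝ)+1) * (2⁻¹:ℝ) ^ N ≤ (1 - (2⁻¹:ℝ) ^ N) ^ (m+1) := by
      have : (1 : ℝ) + (↑(m+1)) * (-((2⁻¹:ℝ) ^ N)) = 1 - ((m:ℝ)+1) * (2⁻¹:ℝ) ^ N := by
        push_cast; ring
      rw [this, ← sub_eq_add_neg] at hber
      exact hber
    nlinarith
  -- transfer to ℝ≥0∞
  have hofpos : (3:ℝ≥0∞)⁻¹ ≤ ((m:ℝ≥0∞) + 1) * ENNReal.ofReal S0 := by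
    have e1 : ((m:ℝ≥0∞) + 1) * ENNReal.ofReal S0 = ENNReal.ofReal (((m:ℝ) + 1) * S0) := by
      rw [ENNReal.ofReal_mul (by positivity), ENNReal.ofReal_add (by positivity) zero_le_one,
        ENNReal.ofReal_natCast, ENNReal.ofReal_one]
    have e2 : (3:ℝ≥0∞)⁻¹ = ENNReal.ofReal (3⁻¹:ℝ) := by
      rw [ENNReal.ofReal_inv_of_pos (by norm_num), ENNReal.ofReal_ofNat]
    rw [e1, e2]
    exact ENNReal.ofReal_le_ofReal hreal
  calc (3:ℝ≥0∞)⁻¹ ≤ ((m:ℝ≥0∞) + 1) * ENNReal.ofReal S0 := hofpos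
    _ = ∑ p ∈ s, μ (A p) := hsum.symm
    _ = μ (⋃ p ∈ s, A p) := (measure_biUnion_finset hdisj fun p _ => hAmeas p).symm
    _ ≤ μ {ω | ∃ i, ∀ j, j ≠ i → X j ω < X i ω} := measure_mono hsub
end

section
/- For a fixed node v with m ≥ 0 surviving neighbors, each tossing i.i.d. Geom(1/2) coins, the probability that v's value is at least the maximum of its neighbors' values, multiplied by (m+1), is at most 2. Consequently, the expected number of nodes covered by v in a single tournament is at most 2. -/
open MeasureTheory ProbabilityTheory
open scoped ENNReal NNReal

private lemma key_real (m : ℕ) (a d : ℝ) (ha : 0 ≤ a) (hd : 0 ≤ d) :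
    (m + 1 : ℝ) * d * a ^ m + a ^ (m + 1) ≤ (a + d) ^ (m + 1) := by
  have hb : a ≤ a + d := le_add_of_nonneg_right hd
  have hsum : (m + 1 : ℝ) * a ^ m ≤
      ∑ i ∈ Finset.range (m + 1), (a + d) ^ i * a ^ (m - i) := by
    have h1 : (m + 1 : ℝ) * a ^ m = ∑ _i ∈ Finset.range (m + 1), a ^ m := by
      simp [Finset.sum_const, nsmul_eq_mul]
    rw [h1]
    refine Finset.sum_le_sum fun i hi => ?_
    have him : i ≤ m := Nat.lt_succ_iff.mp (Finset.mem_range.mp hi)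
    have : a ^ m = a ^ i * a ^ (m - i) := by
      rw [← pow_add, Nat.add_sub_cancel' him]
    rw [this]
    exact mul_le_mul_of_nonneg_right (pow_le_pow_left₀ ha hb i) (pow_nonneg ha _)
  have hgeo := geom_sum₂_mul (a + d) a (m + 1)
  have hd' : (a + d) - a = d := by ring
  rw [hd'] at hgeo
  have : d * ((m + 1 : ℝ) * a ^ m) ≤ d *
      ∑ i ∈ Finset.range (m + 1), (a + d) ^ i * a ^ (m + 1 - 1 - i) := by
    simpa using mul_le_mul_of_nonneg_left hsum hd
  nlinarith [this, hgeo]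

private lemma key_ennreal (m : ℕ) (a d : ℝ≥0∞) (ha : a ≠ ∞) (hd : d ≠ ∞) :
    (m + 1 : ℝ≥0∞) * d * a ^ m + a ^ (m + 1) ≤ (a + d) ^ (m + 1) := by
  lift a to ℝ≥0 using ha
  lift d to ℝ≥0 using hd
  have h2 : (m + 1 : ℝ≥0) * d * a ^ m + a ^ (m + 1) ≤ (a + d) ^ (m + 1) := by
    rw [← NNReal.coe_le_coe]
    push_cast
    exact key_real m a d a.coe_nonneg d.coe_nonneg
  exact_mod_cast h2

private lemma half_pow (n : ℕ) : (2 : ℝ≥0∞) * (2 : ℝ≥0∞)⁻¹ ^ (n + 1) = (2 : ℝ≥0∞)⁻¹ ^ n := by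
  rw [pow_succ', ← mul_assoc, ENNReal.mul_inv_cancel (by norm_num) (by norm_num), one_mul]

private lemma geo_sum (n : ℕ) :
    (∑ j ∈ Finset.range n, (2 : ℝ≥0∞)⁻¹ ^ (j + 1)) + (2 : ℝ≥0∞)⁻¹ ^ n = 1 := by
  induction n with
  | zero => simp
  | succ n ih =>
    rw [Finset.sum_range_succ]
    have h2 : (2 : ℝ≥0∞)⁻¹ ^ (n + 1) + (2 : ℝ≥0∞)⁻¹ ^ (n + 1) = (2 : ℝ≥0∞)⁻¹ ^ n := by
      rw [← two_mul, half_pow]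
    calc (∑ j ∈ Finset.range n, (2 : ℝ≥0∞)⁻¹ ^ (j + 1)) + (2 : ℝ≥0∞)⁻¹ ^ (n + 1)
          + (2 : ℝ≥0∞)⁻¹ ^ (n + 1)
        = (∑ j ∈ Finset.range n, (2 : ℝ≥0∞)⁻¹ ^ (j + 1)) + (2 : ℝ≥0∞)⁻¹ ^ n := by
          rw [add_assoc, h2]
      _ = 1 := ih

/-- For i.i.d. geometric(1/2) random variables `X 0, X 1, ..., X m`, the
probability that `X 0` is at least the maximum of the others, multiplied by
`m + 1`, is at most `2`. -/
theorem ge_max_prob_le_two_div {Ω : Type*} [MeasurableSpace Ω]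
    (μ : Measure Ω) [IsProbabilityMeasure μ] (m : ℕ)
    (X : Fin (m + 1) → Ω → ℕ) (hmeas : ∀ i, Measurable (X i))
    (hindep : iIndepFun X μ)
    (hgeom : ∀ i j, μ {ω | X i ω = j} = (2 : ℝ≥0∞)⁻¹ ^ (j + 1)) :
    μ {ω | ∀ i, X i ω ≤ X 0 ω} * (m + 1) ≤ 2 := by
  set p : ℕ → ℝ≥0∞ := fun k => (2 : ℝ≥0∞)⁻¹ ^ (k + 1) with hp
  set a : ℕ → ℝ≥0∞ := fun k => ∑ j ∈ Finset.range (k + 1), p j with ha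
  -- basic facts about a
  have ha1 : ∀ k, a k + (2 : ℝ≥0∞)⁻¹ ^ (k + 1) = 1 := fun k => geo_sum (k + 1)
  have ha_le : ∀ k, a k ≤ 1 := fun k => le_trans le_self_add (le_of_eq (ha1 k))
  have ha_ne : ∀ k, a k ≠ ∞ := fun k => lt_of_le_of_lt (ha_le k) ENNReal.one_lt_top |>.ne
  have ha_succ : ∀ k, a (k + 1) = a k + (2 : ℝ≥0∞)⁻¹ ^ (k + 2) := fun k => by
    simp [ha, Finset.sum_range_succ, hp]
  -- measure of the "≤ k" events
  have hle : ∀ (i : Fin (m + 1)) (k : ℕ), μ {ω | X i ω ≤ k} = a k := by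
    intro i k
    have hset : {ω | X i ω ≤ k} = ⋃ j ∈ Finset.range (k + 1), {ω | X i ω = j} := by
      ext ω
      simp [Nat.lt_succ_iff, eq_comm]
    rw [hset, measure_biUnion_finset]
    · simp only [hgeom]
      rfl
    · intro x _ y _ hxy
      rw [Function.onFun, Set.disjoint_left]
      rintro ω h1 h2
      exact hxy (h1.symm.trans h2)
    · intro j _
      exact hmeas i (measurableSet_singleton j)
  -- decomposition
  set E : ℕ → Set Ω := fun k => {ω | X 0 ω = k ∧ ∀ i, X i ω ≤ k} with hE
  have hEmeas : ∀ k, MeasurableSet (E k) := by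
    intro k
    have hEeq : E k = (X 0 ⁻¹' {k}) ∩ ⋂ i, X i ⁻¹' Set.Iic k := by
      ext ω
      simp [hE, Set.mem_iInter]
    rw [hEeq]
    exact (hmeas 0 (measurableSet_singleton k)).inter
      (MeasurableSet.iInter fun i => hmeas i measurableSet_Iic)
  have hunion : {ω | ∀ i, X i ω ≤ X 0 ω} = ⋃ k, E k := by
    ext ω
    simp only [Set.mem_setOf_eq, Set.mem_iUnion, hE]
    constructor
    · intro h
      exact ⟨X 0 ω, rfl, h⟩
    · rintro ⟨k, hk, h⟩ i
      exact hk ▸ h i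
  have hdisj : Pairwise (Function.onFun Disjoint E) := by
    intro x y hxy
    rw [Function.onFun, Set.disjoint_left]
    rintro ω ⟨h1, _⟩ ⟨h2, _⟩
    exact hxy (h1.symm.trans h2)
  -- measure of E k via independence
  have hEk : ∀ k, μ (E k) = p k * a k ^ m := by
    intro k
    set B : Fin (m + 1) → Set Ω :=
      fun i => if i = 0 then {ω | X 0 ω = k} else {ω | X i ω ≤ k} with hB
    have hEB : E k = ⋂ i, B i := by
      ext ω
      simp only [hE, Set.mem_setOf_eq, Set.mem_iInter, hB]
      constructor
      · rintro ⟨h0, h⟩ i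
        by_cases hi : i = 0 <;> simp [hi, h0, h i]
      · intro h
        have h0 : X 0 ω = k := by simpa using h 0
        refine ⟨h0, fun i => ?_⟩
        by_cases hi : i = 0
        · subst hi; exact le_of_eq h0
        · simpa [hi] using h i
    have hprod : μ (⋂ i, B i) = ∏ i, μ (B i) := by
      refine hindep.meas_iInter fun i => ?_
      by_cases hi : i = 0
      · subst hi
        exact ⟨{k}, measurableSet_singleton k, rfl⟩
      · refine ⟨Set.Iic k, measurableSet_Iic, ?_⟩
        simp [hB, hi]
        rfl
    rw [hEB, hprod, Fin.prod_univ_succ]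
    have h0 : μ (B 0) = p k := by simp [hB, hgeom 0 k, hp]
    have hsucc : ∀ i : Fin m, μ (B i.succ) = a k := by
      intro i
      simp only [hB, if_neg (Fin.succ_ne_zero i)]
      exact hle i.succ k
    rw [h0]
    congr 1
    rw [Finset.prod_congr rfl fun i _ => hsucc i]
    simp
  -- the sum
  rw [hunion, measure_iUnion hdisj hEmeas]
  simp only [hEk]
  rw [mul_comm, ← ENNReal.tsum_mul_left]
  -- partial sums bound
  have hkey : ∀ N, (∑ k ∈ Finset.range N, (↑m + 1) * (p k * a k ^ m))
      + 2 * a 0 ^ (m + 1) ≤ 2 * a N ^ (m + 1) := by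
    intro N
    induction N with
    | zero => simp
    | succ N ih =>
      rw [Finset.sum_range_succ]
      have hd2 : p N = 2 * (2 : ℝ≥0∞)⁻¹ ^ (N + 2) := (half_pow (N + 1)).symm
      have hstep : 2 * a N ^ (m + 1) + (↑m + 1) * (p N * a N ^ m)
          ≤ 2 * a (N + 1) ^ (m + 1) := by
        rw [ha_succ, hd2]
        calc 2 * a N ^ (m + 1) + (↑m + 1) * (2 * (2 : ℝ≥0∞)⁻¹ ^ (N + 2) * a N ^ m)
            = 2 * ((↑m + 1) * (2 : ℝ≥0∞)⁻¹ ^ (N + 2) * a N ^ m + a N ^ (m + 1)) := by ring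
          _ ≤ 2 * (a N + (2 : ℝ≥0∞)⁻¹ ^ (N + 2)) ^ (m + 1) := by
              gcongr
              exact key_ennreal m (a N) _ (ha_ne N) (ENNReal.pow_ne_top (by simp))
      calc (∑ k ∈ Finset.range N, (↑m + 1) * (p k * a k ^ m)) + (↑m + 1) * (p N * a N ^ m)
            + 2 * a 0 ^ (m + 1)
          = ((∑ k ∈ Finset.range N, (↑m + 1) * (p k * a k ^ m)) + 2 * a 0 ^ (m + 1))
            + (↑m + 1) * (p N * a N ^ m) := by ring
        _ ≤ 2 * a N ^ (m + 1) + (↑m + 1) * (p N * a N ^ m) := by gcongr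
        _ ≤ 2 * a (N + 1) ^ (m + 1) := hstep
  have hpartial : ∀ s : Finset ℕ, (∑ k ∈ s, (↑m + 1) * (p k * a k ^ m)) ≤ 2 := by
    intro s
    obtain ⟨N, hN⟩ := s.exists_nat_subset_range
    calc (∑ k ∈ s, (↑m + 1) * (p k * a k ^ m))
        ≤ ∑ k ∈ Finset.range N, (↑m + 1) * (p k * a k ^ m) :=
          Finset.sum_le_sum_of_subset hN
      _ ≤ 2 * a N ^ (m + 1) := le_trans le_self_add (hkey N)
      _ ≤ 2 * 1 := by gcongr; exact pow_le_one' (ha_le N) _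
      _ = 2 := mul_one 2
  rw [ENNReal.tsum_eq_iSup_sum]
  exact iSup_le hpartial
end

section
/- For i.i.d. Geom(1/2) random variables X_0,...,X_m, P[X_0 ≥ max{X_1,...,X_m}] ≤ 2 · P[X_0 > max{X_1,...,X_m}]. -/
open MeasureTheory ProbabilityTheory
open scoped ENNReal

/-- For i.i.d. geometric(1/2) random variables `X 0, X 1, ..., X m`,
`P[X 0 ≥ max_{1 ≤ i ≤ m} X i] ≤ 2 · P[X 0 > max_{1 ≤ i ≤ m} X i]`. -/
theorem ge_max_le_two_mul_gt_max {Ω : Type*} [MeasurableSpace Ω]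
    (μ : Measure Ω) [IsProbabilityMeasure μ] (m : ℕ)
    (X : Fin (m + 1) → Ω → ℕ) (hmeas : ∀ i, Measurable (X i))
    (hindep : iIndepFun X μ)
    (hgeom : ∀ i j, μ {ω | X i ω = j} = (2 : ℝ≥0∞)⁻¹ ^ (j + 1)) :
    μ {ω | ∀ i, i ≠ 0 → X i ω ≤ X 0 ω} ≤
      2 * μ {ω | ∀ i, i ≠ 0 → X i ω < X 0 ω} := by
  classical
  -- key independence fact
  have key : ∀ (j : ℕ) (S : Set ℕ),
      μ ({ω | X 0 ω = j} ∩ {ω | ∀ i, i ≠ 0 → X i ω ∈ S}) =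
        μ {ω | X 0 ω = j} * μ {ω | ∀ i, i ≠ 0 → X i ω ∈ S} := by
    intro j S
    set f : Fin (m + 1) → Set Ω :=
      fun i => if i = 0 then X 0 ⁻¹' {j} else X i ⁻¹' S with hf
    have hmem : ∀ i ∈ (Finset.univ : Finset (Fin (m + 1))),
        MeasurableSet[MeasurableSpace.comap (X i) inferInstance] (f i) := by
      intro i _
      by_cases h : i = 0
      · subst h; exact ⟨{j}, trivial, by simp [hf]⟩
      · exact ⟨S, trivial, by simp [hf, h]⟩
    have h1 : μ (⋂ i ∈ (Finset.univ : Finset (Fin (m+1))), f i)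
        = ∏ i ∈ (Finset.univ : Finset (Fin (m+1))), μ (f i) :=
      hindep.meas_biInter hmem
    have h2 : μ (⋂ i ∈ Finset.univ.erase (0 : Fin (m+1)), f i)
        = ∏ i ∈ Finset.univ.erase (0 : Fin (m+1)), μ (f i) :=
      hindep.meas_biInter (fun i hi => hmem i (Finset.mem_univ i))
    have e1 : (⋂ i ∈ (Finset.univ : Finset (Fin (m+1))), f i)
        = {ω | X 0 ω = j} ∩ {ω | ∀ i, i ≠ 0 → X i ω ∈ S} := by
      ext ω
      simp only [Set.mem_iInter, Finset.mem_univ, true_implies, Set.mem_inter_iff,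
        Set.mem_setOf_eq, hf]
      constructor
      · intro h
        refine ⟨by simpa using h 0, fun i hi => by simpa [hi] using h i⟩
      · rintro ⟨h0, h⟩ i
        by_cases hi : i = 0
        · subst hi; simpa using h0
        · simpa [hi] using h i hi
    have e2 : (⋂ i ∈ Finset.univ.erase (0 : Fin (m+1)), f i)
        = {ω | ∀ i, i ≠ 0 → X i ω ∈ S} := by
      ext ω
      simp only [Set.mem_iInter, Finset.mem_erase, Finset.mem_univ, and_true,
        Set.mem_setOf_eq, hf]
      constructor
      · intro h i hi; simpa [hi] using h i hi
      · intro h i hi; simpa [hi] using h i hi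
    have e3 : f 0 = {ω | X 0 ω = j} := by ext ω; simp [hf]
    calc μ ({ω | X 0 ω = j} ∩ {ω | ∀ i, i ≠ 0 → X i ω ∈ S})
        = ∏ i ∈ (Finset.univ : Finset (Fin (m+1))), μ (f i) := by rw [← e1, h1]
      _ = μ (f 0) * ∏ i ∈ Finset.univ.erase (0 : Fin (m+1)), μ (f i) :=
          (Finset.mul_prod_erase _ _ (Finset.mem_univ 0)).symm
      _ = μ {ω | X 0 ω = j} * μ {ω | ∀ i, i ≠ 0 → X i ω ∈ S} := by
          rw [e3, ← h2, e2]
  -- events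
  set A : ℕ → Set Ω := fun j => {ω | X 0 ω = j} ∩ {ω | ∀ i, i ≠ 0 → X i ω ≤ j} with hA
  set B : ℕ → Set Ω := fun j => {ω | X 0 ω = j} ∩ {ω | ∀ i, i ≠ 0 → X i ω < j} with hB
  have hAmeas : ∀ j, MeasurableSet (A j) := by
    intro j
    apply MeasurableSet.inter
    · exact hmeas 0 (by trivial : MeasurableSet ({j} : Set ℕ))
    have : {ω | ∀ i, i ≠ 0 → X i ω ≤ j} = ⋂ i, ⋂ (_ : i ≠ 0), {ω | X i ω ≤ j} := by
      ext ω; simp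
    rw [this]
    exact MeasurableSet.iInter fun i => MeasurableSet.iInter fun _ =>
      hmeas i (by trivial : MeasurableSet {n : ℕ | n ≤ j})
  have hBmeas : ∀ j, MeasurableSet (B j) := by
    intro j
    apply MeasurableSet.inter
    · exact hmeas 0 (by trivial : MeasurableSet ({j} : Set ℕ))
    have : {ω | ∀ i, i ≠ 0 → X i ω < j} = ⋂ i, ⋂ (_ : i ≠ 0), {ω | X i ω < j} := by
      ext ω; simp
    rw [this]
    exact MeasurableSet.iInter fun i => MeasurableSet.iInter fun _ =>
      hmeas i (by trivial : MeasurableSet {n : ℕ | n < j})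
  have hAdisj : Pairwise (Function.onFun Disjoint A) := by
    intro a b hab
    simp only [Function.onFun, Set.disjoint_left]
    rintro ω ⟨h1, -⟩ ⟨h2, -⟩
    exact hab (h1.symm.trans h2)
  have hBdisj : Pairwise (Function.onFun Disjoint B) := by
    intro a b hab
    simp only [Function.onFun, Set.disjoint_left]
    rintro ω ⟨h1, -⟩ ⟨h2, -⟩
    exact hab (h1.symm.trans h2)
  have hUA : {ω | ∀ i, i ≠ 0 → X i ω ≤ X 0 ω} = ⋃ j, A j := by
    ext ω
    simp only [Set.mem_iUnion, hA, Set.mem_inter_iff, Set.mem_setOf_eq]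
    constructor
    · intro h; exact ⟨X 0 ω, rfl, fun i hi => h i hi⟩
    · rintro ⟨j, rfl, h⟩; exact h
  have hUB : {ω | ∀ i, i ≠ 0 → X i ω < X 0 ω} = ⋃ j, B j := by
    ext ω
    simp only [Set.mem_iUnion, hB, Set.mem_inter_iff, Set.mem_setOf_eq]
    constructor
    · intro h; exact ⟨X 0 ω, rfl, fun i hi => h i hi⟩
    · rintro ⟨j, rfl, h⟩; exact h
  set Q : ℕ → ℝ≥0∞ := fun j => μ {ω | ∀ i, i ≠ 0 → X i ω ≤ j} with hQ
  set R : ℕ → ℝ≥0∞ := fun j => μ {ω | ∀ i, i ≠ 0 → X i ω < j} with hR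
  have hAj : ∀ j, μ (A j) = (2 : ℝ≥0∞)⁻¹ ^ (j + 1) * Q j := by
    intro j
    have := key j (Set.Iic j)
    simp only [Set.mem_Iic] at this
    rw [hA]
    simp only []
    rw [this, hgeom 0 j]
  have hBj : ∀ j, μ (B j) = (2 : ℝ≥0∞)⁻¹ ^ (j + 1) * R j := by
    intro j
    have := key j (Set.Iio j)
    simp only [Set.mem_Iio] at this
    rw [hB]
    simp only []
    rw [this, hgeom 0 j]
  have hRQ : ∀ k, R (k + 1) = Q k := by
    intro k
    have hs : {ω | ∀ i, i ≠ 0 → X i ω < k + 1} = {ω | ∀ i, i ≠ 0 → X i ω ≤ k} := by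
      ext ω; simp [Nat.lt_succ_iff]
    simp only [hR, hQ, hs]
  have hmuA : μ {ω | ∀ i, i ≠ 0 → X i ω ≤ X 0 ω} = ∑' j, (2 : ℝ≥0∞)⁻¹ ^ (j + 1) * Q j := by
    rw [hUA, measure_iUnion hAdisj hAmeas]
    exact tsum_congr hAj
  have hmuB : μ {ω | ∀ i, i ≠ 0 → X i ω < X 0 ω} = ∑' j, (2 : ℝ≥0∞)⁻¹ ^ (j + 1) * R j := by
    rw [hUB, measure_iUnion hBdisj hBmeas]
    exact tsum_congr hBj
  rw [hmuA, hmuB]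
  calc ∑' j, (2 : ℝ≥0∞)⁻¹ ^ (j + 1) * Q j
      = ∑' k, 2 * ((2 : ℝ≥0∞)⁻¹ ^ (k + 1 + 1) * R (k + 1)) := by
        refine tsum_congr fun k => ?_
        have h2 : (2 : ℝ≥0∞) * 2⁻¹ = 1 := ENNReal.mul_inv_cancel two_ne_zero ENNReal.ofNat_ne_top
        rw [hRQ k, pow_succ' (2 : ℝ≥0∞)⁻¹ (k + 1), ← mul_assoc, ← mul_assoc, h2, one_mul]
    _ = 2 * ∑' k, (2 : ℝ≥0∞)⁻¹ ^ (k + 1 + 1) * R (k + 1) := ENNReal.tsum_mul_left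
    _ ≤ 2 * ∑' j, (2 : ℝ≥0∞)⁻¹ ^ (j + 1) * R j := by
        refine mul_le_mul_right ?_ 2
        exact ENNReal.tsum_comp_le_tsum_of_injective
          (fun a b h => by simpa using h : Function.Injective (· + 1 : ℕ → ℕ))
          (fun j => (2 : ℝ≥0∞)⁻¹ ^ (j + 1) * R j)
end
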